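/- arXiv:1008.3813 — 10 statements merged into one kernel-verified Lean document; each statement's English description precedes it below -/
import Mathlib

section
/- For every integer N ≥ 2 and reals g, h > 0 with max{g, N·h} ≥ 1, one has (1/2)·log(1 + N²gh/(1 + g + N·h)) ≥ (1/2)·log(1 + (1/3)·N·min{g, N·h}). -/
theorem af_rate_high_snr (N : ℕ) (hN : 2 ≤ N) (g h : ℝ) (hg : 0 < g) (hh : 0 < h)
    (hmax : 1 ≤ max g ((N : ℝ) * h)) :
    (1 / 2) * Real.logb 2 (1 + (1 / 3) * (N : ℝ) * min g ((N : ℝ) * h)) ≤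
      (1 / 2) * Real.logb 2 (1 + (N : ℝ) ^ 2 * g * h / (1 + g + (N : ℝ) * h)) := by
  have hNpos : (0 : ℝ) < N := by positivity
  set m := min g ((N : ℝ) * h) with hm
  set M := max g ((N : ℝ) * h) with hM
  have hmpos : 0 < m := lt_min hg (by positivity)
  have hmM : m ≤ M := min_le_max
  have hsum : g + (N : ℝ) * h = m + M := (min_add_max g ((N : ℝ) * h)).symm
  have hprod : g * ((N : ℝ) * h) = m * M := (min_mul_max g ((N : ℝ) * h)).symm
  have hden : 0 < 1 + g + (N : ℝ) * h := by positivity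
  have hkey : (1 / 3) * (N : ℝ) * m ≤ (N : ℝ) ^ 2 * g * h / (1 + g + (N : ℝ) * h) := by
    rw [le_div_iff₀ hden]
    have h3M : 1 + g + (N : ℝ) * h ≤ 3 * M := by
      rw [add_assoc, hsum]
      nlinarith
    have hNgh : (N : ℝ) ^ 2 * g * h = (N : ℝ) * (m * M) := by
      rw [← hprod]; ring
    rw [hNgh]
    have h4 := mul_le_mul_of_nonneg_left h3M (by positivity : (0:ℝ) ≤ 1/3 * (N:ℝ) * m)
    nlinarith
  have harg : 0 < 1 + (1/3) * (N:ℝ) * m := by positivity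
  gcongr 1/2 * ?_
  exact Real.logb_le_logb_of_le (by norm_num) harg (by linarith)
end

section
/- For every integer N ≥ 2 and reals g, h > 0 with max{g, N·h} < 1 and g ≤ h, setting δ = N·g one has δ ≤ 1 and (1/2)·δ·log(1 + (N²gh/δ²)/(1 + g/δ + N·h/δ)) ≥ (1/2)·ln(4/3)·log(1 + N·g). -/
theorem bursty_af_rate_weak_broadcast (N : ℕ) (hN : 2 ≤ N) (g h : ℝ)
    (hg : 0 < g) (hh : 0 < h) (hmax : max g ((N : ℝ) * h) < 1) (hgh : g ≤ h) :
    (N : ℝ) * g ≤ 1 ∧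
    (1 / 2) * Real.log (4 / 3) * Real.logb 2 (1 + (N : ℝ) * g) ≤
      (1 / 2) * ((N : ℝ) * g) *
        Real.logb 2 (1 + ((N : ℝ) ^ 2 * g * h / ((N : ℝ) * g) ^ 2) /
          (1 + g / ((N : ℝ) * g) + (N : ℝ) * h / ((N : ℝ) * g))) := by
  have hN2 : (2 : ℝ) ≤ (N : ℝ) := by exact_mod_cast hN
  have hNpos : (0 : ℝ) < (N : ℝ) := by linarith
  have hx : 0 < (N : ℝ) * g := mul_pos hNpos hg
  have hNh : (N : ℝ) * h < 1 := lt_of_le_of_lt (le_max_right _ _) hmax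
  have hle1 : (N : ℝ) * g ≤ 1 :=
    le_of_lt (lt_of_le_of_lt (by nlinarith : (N : ℝ) * g ≤ (N : ℝ) * h) hNh)
  refine ⟨hle1, ?_⟩
  set A := ((N : ℝ) ^ 2 * g * h / ((N : ℝ) * g) ^ 2) /
      (1 + g / ((N : ℝ) * g) + (N : ℝ) * h / ((N : ℝ) * g)) with hA
  have hAval : A = (h / g) / (1 + 1 / (N : ℝ) + h / g) := by
    rw [hA]
    field_simp
  have htg : 1 ≤ h / g := (one_le_div hg).2 hgh
  have hA3 : 1 / 3 ≤ A := by
    rw [hAval]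
    rw [div_le_div_iff₀ (by norm_num) (by positivity)]
    have h1N : 1 / (N : ℝ) ≤ 1 / 2 := by
      rw [div_le_div_iff₀ hNpos (by norm_num)]; linarith
    linarith
  have hlog2 : (0 : ℝ) < Real.log 2 := Real.log_pos (by norm_num)
  have hlog43 : (0 : ℝ) < Real.log (4 / 3) := Real.log_pos (by norm_num)
  -- logb 2 (4/3) ≤ logb 2 (1 + A)
  have hmono : Real.logb 2 (4 / 3) ≤ Real.logb 2 (1 + A) := by
    exact Real.logb_le_logb_of_le (by norm_num) (by norm_num) (by linarith)
  have h43pos : (0:ℝ) < Real.logb 2 (4/3) := Real.logb_pos (by norm_num) (by norm_num)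
  have hln : Real.log (1 + (N : ℝ) * g) ≤ (N : ℝ) * g := by
    have := Real.log_le_sub_one_of_pos (by linarith : (0:ℝ) < 1 + (N : ℝ) * g)
    linarith
  have key : (1 / 2) * Real.log (4 / 3) * Real.logb 2 (1 + (N : ℝ) * g) ≤
      (1 / 2) * ((N : ℝ) * g) * Real.logb 2 (4 / 3) := by
    rw [Real.logb, Real.logb, ← mul_div_assoc, ← mul_div_assoc,
      div_le_div_iff₀ hlog2 hlog2]
    have hlnn : 0 ≤ Real.log (1 + (N : ℝ) * g) :=
      Real.log_nonneg (by linarith)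
    nlinarith [mul_le_mul_of_nonneg_left hln (le_of_lt hlog43)]
  calc (1 / 2) * Real.log (4 / 3) * Real.logb 2 (1 + (N : ℝ) * g)
      ≤ (1 / 2) * ((N : ℝ) * g) * Real.logb 2 (4 / 3) := key
    _ ≤ (1 / 2) * ((N : ℝ) * g) * Real.logb 2 (1 + A) := by
        apply mul_le_mul_of_nonneg_left hmono (by positivity)
end

section
/- For every integer N ≥ 2 and reals g, h > 0 with h < g < N²·h and N·√(gh) < 1, setting δ = N·√(gh) one has δ ∈ (0,1] and (1/2)·δ·log(1 + (N²gh/δ²)/(1 + g/δ + N·h/δ)) ≥ (1/2)·ln(4/3)·log(1 + N·√(gh)). -/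
theorem bursty_af_rate_intermediate (N : ℕ) (hN : 2 ≤ N) (g h : ℝ)
    (hg : 0 < g) (hh : 0 < h) (h1 : h < g) (h2 : g < (N : ℝ) ^ 2 * h)
    (h3 : (N : ℝ) * Real.sqrt (g * h) < 1) :
    (N : ℝ) * Real.sqrt (g * h) ∈ Set.Ioc (0 : ℝ) 1 ∧
    (1 / 2) * Real.log (4 / 3) * Real.logb 2 (1 + (N : ℝ) * Real.sqrt (g * h)) ≤
      (1 / 2) * ((N : ℝ) * Real.sqrt (g * h)) *
        Real.logb 2 (1 + ((N : ℝ) ^ 2 * g * h / ((N : ℝ) * Real.sqrt (g * h)) ^ 2) /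
          (1 + g / ((N : ℝ) * Real.sqrt (g * h)) +
            (N : ℝ) * h / ((N : ℝ) * Real.sqrt (g * h)))) := by
  have hN0 : (0:ℝ) < N := by
    have : (2:ℝ) ≤ N := by exact_mod_cast hN
    linarith
  have hgh : 0 < g * h := mul_pos hg hh
  set s := Real.sqrt (g * h) with hs
  have hspos : 0 < s := Real.sqrt_pos.mpr hgh
  have hs2 : s ^ 2 = g * h := Real.sq_sqrt hgh.le
  set δ := (N:ℝ) * s with hδdef
  have hδpos : 0 < δ := mul_pos hN0 hspos
  have hδ2 : δ ^ 2 = (N:ℝ) ^ 2 * (g * h) := by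
    rw [hδdef, mul_pow, hs2]
  refine ⟨⟨hδpos, h3.le⟩, ?_⟩
  -- g ≤ δ  (since g² < N² g h = δ²)
  have hgδ : g ≤ δ := by nlinarith [sq_nonneg (δ - g), sq_nonneg (δ + g)]
  -- N h ≤ δ (since h ≤ g ⇒ (Nh)² ≤ N² g h = δ²)
  have hhδ : (N:ℝ) * h ≤ δ := by nlinarith [sq_nonneg (δ - (N:ℝ)*h), sq_nonneg (δ + (N:ℝ)*h), mul_pos hN0 hh]
  set D := 1 + g / δ + (N:ℝ) * h / δ with hD
  have hD1 : 1 ≤ D := by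
    have : 0 ≤ g / δ := by positivity
    have : 0 ≤ (N:ℝ) * h / δ := by positivity
    simp only [hD]; linarith
  have hD3 : D ≤ 3 := by
    have e1 : g / δ ≤ 1 := (div_le_one hδpos).mpr hgδ
    have e2 : (N:ℝ) * h / δ ≤ 1 := (div_le_one hδpos).mpr hhδ
    simp only [hD]; linarith
  have hDpos : 0 < D := lt_of_lt_of_le one_pos hD1
  have hnum : (N:ℝ) ^ 2 * g * h / δ ^ 2 = 1 := by
    rw [hδ2]; field_simp
  have harg : 1 + ((N:ℝ) ^ 2 * g * h / δ ^ 2) / D = 1 + 1 / D := by rw [hnum]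
  have h43 : (4:ℝ)/3 ≤ 1 + 1 / D := by
    have : 1/3 ≤ 1/D := by
      apply one_div_le_one_div_of_le hDpos hD3
    linarith
  have hlog2 : 0 < Real.log 2 := Real.log_pos (by norm_num)
  have key : Real.log (4/3) * Real.log (1 + δ) ≤ δ * Real.log (1 + 1/D) := by
    have a : Real.log (1 + δ) ≤ δ := by
      have := Real.log_le_sub_one_of_pos (show (0:ℝ) < 1 + δ by linarith)
      linarith
    have b : Real.log (4/3) ≤ Real.log (1 + 1/D) := Real.log_le_log (by norm_num) h43
    have l0 : 0 ≤ Real.log (4/3) := Real.log_nonneg (by norm_num)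
    calc Real.log (4/3) * Real.log (1 + δ) ≤ Real.log (4/3) * δ :=
          mul_le_mul_of_nonneg_left a l0
      _ ≤ Real.log (1 + 1/D) * δ := mul_le_mul_of_nonneg_right b hδpos.le
      _ = δ * Real.log (1 + 1/D) := mul_comm _ _
  have goal2 : (1/2) * Real.log (4/3) * Real.logb 2 (1 + δ) ≤
      (1/2) * δ * Real.logb 2 (1 + 1/D) := by
    simp only [Real.logb]
    rw [show (1:ℝ)/2 * Real.log (4/3) * (Real.log (1 + δ) / Real.log 2)
        = (Real.log (4/3) * Real.log (1 + δ)) / (2 * Real.log 2) by ring,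
      show (1:ℝ)/2 * δ * (Real.log (1 + 1/D) / Real.log 2)
        = (δ * Real.log (1 + 1/D)) / (2 * Real.log 2) by ring]
    exact div_le_div_of_nonneg_right key (by linarith) |>.trans_eq rfl
  calc (1/2) * Real.log (4/3) * Real.logb 2 (1 + δ) ≤
      (1/2) * δ * Real.logb 2 (1 + 1/D) := goal2
    _ = (1/2) * δ * Real.logb 2 (1 + ((N:ℝ) ^ 2 * g * h / δ ^ 2) / D) := by rw [harg]
end

section
/- For every integer N ≥ 2 and reals g, h > 0 with max{g, N·h} < 1 and g ≥ N²·h, setting δ = N²·h one has δ ≤ 1 and (1/2)·δ·log(1 + (N²gh/δ²)/(1 + g/δ + N·h/δ)) ≥ (1/2)·ln(4/3)·log(1 + N²·h). -/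
theorem bursty_af_rate_strong_broadcast (N : ℕ) (hN : 2 ≤ N) (g h : ℝ)
    (hg : 0 < g) (hh : 0 < h) (hmax : max g ((N : ℝ) * h) < 1)
    (hgh : (N : ℝ) ^ 2 * h ≤ g) :
    (N : ℝ) ^ 2 * h ≤ 1 ∧
    (1 / 2) * Real.log (4 / 3) * Real.logb 2 (1 + (N : ℝ) ^ 2 * h) ≤
      (1 / 2) * ((N : ℝ) ^ 2 * h) *
        Real.logb 2 (1 + ((N : ℝ) ^ 2 * g * h / ((N : ℝ) ^ 2 * h) ^ 2) /
          (1 + g / ((N : ℝ) ^ 2 * h) + (N : ℝ) * h / ((N : ℝ) ^ 2 * h))) := by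
  have hN2 : (2:ℝ) ≤ (N:ℝ) := by exact_mod_cast hN
  have hNpos : (0:ℝ) < (N:ℝ) := by linarith
  have hδpos : 0 < (N:ℝ)^2 * h := by positivity
  have hg1 : g < 1 := lt_of_le_of_lt (le_max_left _ _) hmax
  have hδ1 : (N:ℝ)^2 * h ≤ 1 := le_of_lt (lt_of_le_of_lt hgh hg1)
  refine ⟨hδ1, ?_⟩
  have hx : (N:ℝ)^2 * g * h / ((N:ℝ)^2 * h)^2 = g / ((N:ℝ)^2 * h) := by
    field_simp
  have hy : (N:ℝ) * h / ((N:ℝ)^2 * h) = 1 / (N:ℝ) := by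
    field_simp
  rw [hx, hy]
  set x := g / ((N:ℝ)^2 * h) with hxd
  have hx1 : 1 ≤ x := (one_le_div hδpos).mpr hgh
  have hinvN : 1/(N:ℝ) ≤ 1/2 := by
    rw [div_le_div_iff₀ hNpos (by norm_num)]; linarith
  have hden : 0 < 1 + x + 1/(N:ℝ) := by positivity
  have hfrac : (1:ℝ)/3 ≤ x / (1 + x + 1/(N:ℝ)) := by
    rw [div_le_div_iff₀ (by norm_num) hden]
    linarith
  have hA : (4:ℝ)/3 ≤ 1 + x / (1 + x + 1/(N:ℝ)) := by linarith
  have hlog2 : 0 < Real.log 2 := Real.log_pos (by norm_num)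
  have hlogb : Real.logb 2 (4/3) ≤ Real.logb 2 (1 + x / (1+x+1/(N:ℝ))) :=
    Real.logb_le_logb_of_le (by norm_num) (by norm_num) hA
  have hlog1 : Real.log (1 + (N:ℝ)^2 * h) ≤ (N:ℝ)^2 * h := by
    have := Real.log_le_sub_one_of_pos (x := 1 + (N:ℝ)^2 * h) (by linarith)
    linarith
  have hlog43 : 0 < Real.log (4/3) := Real.log_pos (by norm_num)
  have h1 : Real.logb 2 (1 + (N:ℝ)^2 * h) ≤ (N:ℝ)^2 * h / Real.log 2 := by
    rw [Real.logb, div_le_div_iff₀ hlog2 hlog2]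
    nlinarith
  have h2 : Real.logb 2 (4/3) = Real.log (4/3) / Real.log 2 := rfl
  calc (1/2) * Real.log (4/3) * Real.logb 2 (1 + (N:ℝ)^2 * h)
      ≤ (1/2) * Real.log (4/3) * ((N:ℝ)^2 * h / Real.log 2) := by
        have : (0:ℝ) ≤ (1/2) * Real.log (4/3) := by positivity
        nlinarith
    _ = (1/2) * ((N:ℝ)^2 * h) * Real.logb 2 (4/3) := by
        rw [h2]; ring
    _ ≤ (1/2) * ((N:ℝ)^2 * h) * Real.logb 2 (1 + x / (1+x+1/(N:ℝ))) := by
        have : (0:ℝ) ≤ (1/2) * ((N:ℝ)^2 * h) := by positivity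
        nlinarith
end

section
/- Let N ≥ 2 and ρ ∈ (−1/(N−1), 0). For every integer n with 0 ≤ n ≤ N, the function ρ ↦ n·(1 + (n−1)·ρ − n·(N−n)·ρ²/(1 + (N−n−1)·ρ)) has nonnegative derivative: d/dρ of this expression equals n·((n−1) − n(N−n)·ρ·(2+(N−n−1)ρ)/(1+(N−n−1)ρ)²), which is nonnegative for ρ ∈ (−1/(N−1), 0). -/
theorem cutset_multiplier_monotone (N n : ℕ) (hN : 2 ≤ N) (hn : n ≤ N)
    (ρ : ℝ) (hρ : ρ ∈ Set.Ioo (-(1 / ((N : ℝ) - 1))) 0) :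
    HasDerivAt
      (fun r : ℝ => (n : ℝ) * (1 + ((n : ℝ) - 1) * r -
        (n : ℝ) * ((N : ℝ) - n) * r ^ 2 / (1 + ((N : ℝ) - n - 1) * r)))
      ((n : ℝ) * (((n : ℝ) - 1) -
        (n : ℝ) * ((N : ℝ) - n) * ρ * (2 + ((N : ℝ) - n - 1) * ρ) /
          (1 + ((N : ℝ) - n - 1) * ρ) ^ 2)) ρ ∧
    0 ≤ (n : ℝ) * (((n : ℝ) - 1) -
        (n : ℝ) * ((N : ℝ) - n) * ρ * (2 + ((N : ℝ) - n - 1) * ρ) /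
          (1 + ((N : ℝ) - n - 1) * ρ) ^ 2) := by
  obtain ⟨h1, h2⟩ := hρ
  set d : ℝ := (N : ℝ) - n - 1 with hd
  have hN2 : (2 : ℝ) ≤ (N : ℝ) := by exact_mod_cast hN
  have hnN : (n : ℝ) ≤ (N : ℝ) := by exact_mod_cast hn
  have hn0 : (0 : ℝ) ≤ (n : ℝ) := Nat.cast_nonneg n
  have hN1 : (0 : ℝ) < (N : ℝ) - 1 := by linarith
  -- key bound : -1 < d * ρ
  have hdρ : -1 < d * ρ := by
    rcases le_or_gt 0 d with hd0 | hd0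
    · have hle : d ≤ (N : ℝ) - 1 := by simp only [hd]; linarith
      have h3 : ((N : ℝ) - 1) * ρ ≤ d * ρ :=
        mul_le_mul_of_nonpos_right hle (le_of_lt h2)
      have h4 : ((N : ℝ) - 1) * (-(1 / ((N : ℝ) - 1))) < ((N : ℝ) - 1) * ρ :=
        mul_lt_mul_of_pos_left h1 hN1
      have h5 : ((N : ℝ) - 1) * (-(1 / ((N : ℝ) - 1))) = -1 := by
        field_simp
      linarith
    · have : 0 < d * ρ := mul_pos_of_neg_of_neg hd0 h2
      linarith
  have hden : 0 < 1 + d * ρ := by linarith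
  have hden2 : 0 < 2 + d * ρ := by linarith
  have hne : 1 + d * ρ ≠ 0 := ne_of_gt hden
  constructor
  · -- derivative of r^2/(1+d r)
    have hq : HasDerivAt (fun r : ℝ => r ^ 2 / (1 + d * r))
        (ρ * (2 + d * ρ) / (1 + d * ρ) ^ 2) ρ := by
      have ha : HasDerivAt (fun r : ℝ => r ^ 2) (2 * ρ) ρ := by
        simpa using (hasDerivAt_pow 2 ρ)
      have hb : HasDerivAt (fun r : ℝ => 1 + d * r) d ρ := by
        simpa using ((hasDerivAt_id ρ).const_mul d).const_add 1
      have := ha.div hb hne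
      refine this.congr_deriv ?_
      field_simp
      ring
    have hq2 : HasDerivAt (fun r : ℝ => (n : ℝ) * ((N : ℝ) - n) * r ^ 2 / (1 + d * r))
        ((n : ℝ) * ((N : ℝ) - n) * (ρ * (2 + d * ρ) / (1 + d * ρ) ^ 2)) ρ := by
      have := hq.const_mul ((n : ℝ) * ((N : ℝ) - n))
      refine this.congr_of_eventuallyEq (Filter.Eventually.of_forall fun r => ?_)
      ring
    have hlin : HasDerivAt (fun r : ℝ => 1 + ((n : ℝ) - 1) * r) ((n : ℝ) - 1) ρ := by
      simpa using ((hasDerivAt_id ρ).const_mul ((n : ℝ) - 1)).const_add 1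
    have := (hlin.sub hq2).const_mul (n : ℝ)
    refine this.congr_deriv ?_
    ring
  · -- nonnegativity
    rcases Nat.eq_zero_or_pos n with hn' | hn'
    · simp [hn']
    have hn1 : (1 : ℝ) ≤ (n : ℝ) := by exact_mod_cast hn'
    have hnum : (n : ℝ) * ((N : ℝ) - n) * ρ * (2 + d * ρ) ≤ 0 := by
      have h6 : 0 ≤ (n : ℝ) * ((N : ℝ) - n) := by
        apply mul_nonneg hn0; linarith
      have h7 : ρ * (2 + d * ρ) ≤ 0 :=
        mul_nonpos_of_nonpos_of_nonneg (le_of_lt h2) (le_of_lt hden2)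
      calc (n : ℝ) * ((N : ℝ) - n) * ρ * (2 + d * ρ)
          = (n : ℝ) * ((N : ℝ) - n) * (ρ * (2 + d * ρ)) := by ring
        _ ≤ 0 := mul_nonpos_of_nonneg_of_nonpos h6 h7
    have hdiv : (n : ℝ) * ((N : ℝ) - n) * ρ * (2 + d * ρ) / (1 + d * ρ) ^ 2 ≤ 0 :=
      div_nonpos_of_nonpos_of_nonneg hnum (by positivity)
    apply mul_nonneg hn0
    linarith
end

section
/- Let N ≥ 2, ρ ∈ (−1/(N−1), 1), and let Q^ρ be the N×N matrix with 1 on the diagonal and ρ off the diagonal. For any integer n with 1 ≤ n ≤ N−1, with S = {1,…,n} and the Schur complement Q_{S|S^c} = Q_{S,S} − Q_{S,S^c}(Q_{S^c,S^c})^{-1} Q_{S^c,S}, one has 𝟙ᵀ Q_{S|S^c} 𝟙 = n·(1 + (n−1)ρ − n(N−n)ρ²/(1 + (N−n−1)ρ)), where 𝟙 is the all-ones vector of length n. -/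
open Matrix

theorem schur_complement_quadratic_form (n m : ℕ) (hn : 1 ≤ n) (hm : 1 ≤ m)
    (ρ : ℝ) (hρ : ρ ∈ Set.Ioo (-(1 / (((n : ℝ) + m) - 1))) 1)
    (Q : Matrix (Fin n ⊕ Fin m) (Fin n ⊕ Fin m) ℝ)
    (hQ : Q = Matrix.of fun i j => if i = j then (1 : ℝ) else ρ) :
    ∑ i : Fin n, ∑ j : Fin n,
        (Q.toBlocks₁₁ - Q.toBlocks₁₂ * (Q.toBlocks₂₂)⁻¹ * Q.toBlocks₂₁) i j =
      (n : ℝ) * (1 + ((n : ℝ) - 1) * ρ -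
        (n : ℝ) * (m : ℝ) * ρ ^ 2 / (1 + ((m : ℝ) - 1) * ρ)) := by
  obtain ⟨h1, h2⟩ := hρ
  have hm' : (1:ℝ) ≤ m := by exact_mod_cast hm
  have hn' : (1:ℝ) ≤ n := by exact_mod_cast hn
  have hd : (0:ℝ) < (n:ℝ) + m - 1 := by linarith
  have h1' : -1 < ρ * ((n:ℝ) + m - 1) := by
    have := mul_lt_mul_of_pos_right h1 hd
    have h0 : -(1 / ((n:ℝ) + m - 1)) * ((n:ℝ) + m - 1) = -1 := by
      field_simp
    linarith [h0 ▸ this]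
  have hc : (0:ℝ) < 1 + ((m:ℝ) - 1) * ρ := by
    rcases le_or_gt 0 ρ with h | h
    · nlinarith
    · nlinarith
  have h1ρ : (0:ℝ) < 1 - ρ := by linarith
  have hc' : 1 + ρ * ((m:ℝ) - 1) ≠ 0 := by nlinarith
  set a : ℝ := (1 - ρ)⁻¹ with ha
  set b : ℝ := -ρ / ((1 - ρ) * (1 + ((m:ℝ) - 1) * ρ)) with hb
  set M : Matrix (Fin m) (Fin m) ℝ := Matrix.of (fun k l => if k = l then a + b else b) with hMdef
  have hQ22 : ∀ k x : Fin m, Q.toBlocks₂₂ k x = ρ + (if k = x then 1 - ρ else 0) := by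
    intro k x
    simp only [hQ, toBlocks₂₂, of_apply, Sum.inr.injEq]
    split_ifs <;> ring
  have hMe : ∀ x l : Fin m, M x l = b + (if x = l then a else 0) := by
    intro x l
    simp only [hMdef, of_apply]
    split_ifs <;> ring
  have hM : Q.toBlocks₂₂ * M = 1 := by
    ext k l
    rw [Matrix.mul_apply]
    simp_rw [hQ22, hMe, Matrix.one_apply]
    have : ∀ x : Fin m, (ρ + (if k = x then 1 - ρ else 0)) * (b + (if x = l then a else 0))
        = ρ * b + ρ * (if x = l then a else 0) + b * (if k = x then 1 - ρ else 0)
          + (if k = x then 1 - ρ else 0) * (if x = l then a else 0) := by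
      intro x; ring
    simp_rw [this, Finset.sum_add_distrib, Finset.sum_const, Finset.card_univ,
      Fintype.card_fin, mul_ite, mul_zero, ite_mul, zero_mul, Finset.sum_ite_eq,
      Finset.sum_ite_eq', Finset.mem_univ, if_true, nsmul_eq_mul]
    rcases eq_or_ne k l with rfl | hkl
    · rw [if_pos rfl, if_pos rfl]
      rw [ha, hb]
      field_simp
      ring
    · simp only [if_neg hkl]
      rw [ha, hb]
      field_simp
      ring
  have hinv : (Q.toBlocks₂₂)⁻¹ = M := Matrix.inv_eq_right_inv hM
  have hQ12 : ∀ (i : Fin n) (k : Fin m), Q.toBlocks₁₂ i k = ρ := by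
    intro i k; simp [hQ, toBlocks₁₂]
  have hQ21 : ∀ (k : Fin m) (j : Fin n), Q.toBlocks₂₁ k j = ρ := by
    intro k j; simp [hQ, toBlocks₂₁]
  have hQ11 : ∀ i j : Fin n, Q.toBlocks₁₁ i j = ρ + (if i = j then 1 - ρ else 0) := by
    intro i j
    simp only [hQ, toBlocks₁₁, of_apply, Sum.inl.injEq]
    split_ifs <;> ring
  have hMsum : ∑ x : Fin m, ∑ l : Fin m, M x l = (m:ℝ) / (1 + ((m:ℝ) - 1) * ρ) := by
    simp_rw [hMe, Finset.sum_add_distrib, Finset.sum_const, Finset.card_univ,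
      Fintype.card_fin, Finset.sum_ite_eq, Finset.mem_univ, if_true, nsmul_eq_mul]
    simp only [Finset.sum_const, Finset.card_univ, Fintype.card_fin, nsmul_eq_mul]
    rw [ha, hb]
    field_simp
    ring
  have hterm : ∀ i j : Fin n,
      (Q.toBlocks₁₂ * (Q.toBlocks₂₂)⁻¹ * Q.toBlocks₂₁) i j
        = ρ ^ 2 * ((m:ℝ) / (1 + ((m:ℝ) - 1) * ρ)) := by
    intro i j
    rw [hinv, Matrix.mul_apply]
    simp_rw [Matrix.mul_apply, hQ12, hQ21]
    have hx : ∀ k : Fin m, (∑ x, ρ * M x k) * ρ = ρ ^ 2 * ∑ x, M x k := by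
      intro k
      rw [Finset.sum_mul, Finset.mul_sum]
      exact Finset.sum_congr rfl fun x _ => by ring
    simp_rw [hx]
    rw [← Finset.mul_sum, Finset.sum_comm, hMsum]
  simp_rw [Matrix.sub_apply, hterm, hQ11, Finset.sum_sub_distrib, Finset.sum_add_distrib,
    Finset.sum_const, Finset.card_univ, Fintype.card_fin, Finset.sum_ite_eq,
    Finset.mem_univ, if_true, nsmul_eq_mul]
  simp only [Finset.sum_const, Finset.card_univ, Fintype.card_fin, nsmul_eq_mul]
  field_simp
  ring
end

section
/- Let λ₁ ∈ [0,1], λ₂ = 1−λ₁, and let Q¹, Q² be real positive semidefinite N×N matrices with Schur complements (with respect to a fixed index subset S^c, using Moore–Penrose generalized inverses) Q¹_{S|S^c} and Q²_{S|S^c}. If Q = λ₁Q¹ + λ₂Q², then for the all-ones vector 𝟙 and any h ≥ 0: (1/2)·log(1 + h·𝟙ᵀ Q_{S|S^c} 𝟙) ≥ λ₁·(1/2)·log(1 + h·𝟙ᵀ Q¹_{S|S^c} 𝟙) + λ₂·(1/2)·log(1 + h·𝟙ᵀ Q²_{S|S^c} 𝟙). -/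
open Matrix

/-- `B` is a Moore–Penrose generalized inverse of `A`. -/
def IsMoorePenroseInv {k : Type*} [Fintype k] [DecidableEq k]
    (A B : Matrix k k ℝ) : Prop :=
  A * B * A = A ∧ B * A * B = B ∧ (A * B)ᵀ = A * B ∧ (B * A)ᵀ = B * A

/-- Generalized Schur complement of the lower-right block, with respect to a
given generalized inverse `B` of the lower-right block. -/
def genSchur {a b : ℕ} (Q : Matrix (Fin a ⊕ Fin b) (Fin a ⊕ Fin b) ℝ)
    (B : Matrix (Fin b) (Fin b) ℝ) : Matrix (Fin a) (Fin a) ℝ :=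
  Q.toBlocks₁₁ - Q.toBlocks₁₂ * B * Q.toBlocks₂₁

lemma dot_trans {m n : Type*} [Fintype m] [Fintype n] (M : Matrix m n ℝ) (u : m → ℝ) (w : n → ℝ) :
    u ⬝ᵥ M *ᵥ w = Mᵀ *ᵥ u ⬝ᵥ w := by
  rw [Matrix.dotProduct_mulVec, Matrix.mulVec_transpose]

variable {a b : ℕ} {Q : Matrix (Fin a ⊕ Fin b) (Fin a ⊕ Fin b) ℝ}
  {B : Matrix (Fin b) (Fin b) ℝ}

lemma blocks21_eq (hQ : Q.PosSemidef) : Q.toBlocks₂₁ = Q.toBlocks₁₂ᵀ := by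
  have h : Qᵀ = Q := hQ.isHermitian
  ext i j
  have := congrFun (congrFun h (Sum.inr i)) (Sum.inl j)
  simpa [Matrix.toBlocks₂₁, Matrix.toBlocks₁₂, Matrix.transpose_apply] using this.symm

lemma blocks22_symm (hQ : Q.PosSemidef) : Q.toBlocks₂₂ᵀ = Q.toBlocks₂₂ := by
  have h : Qᵀ = Q := hQ.isHermitian
  ext i j
  have := congrFun (congrFun h (Sum.inr i)) (Sum.inr j)
  simpa [Matrix.toBlocks₂₂, Matrix.transpose_apply] using this

lemma ker_block (hQ : Q.PosSemidef) {v : Fin b → ℝ} (hv : Q.toBlocks₂₂ *ᵥ v = 0) :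
    Q.toBlocks₁₂ *ᵥ v = 0 := by
  have h0 : Q *ᵥ Sum.elim 0 v = 0 := by
    rw [← (hQ.dotProduct_mulVec_zero_iff (Sum.elim 0 v))]
    simp only [star_trivial]
    conv_lhs => rw [← Matrix.fromBlocks_toBlocks Q]
    rw [Matrix.fromBlocks_mulVec, sumElim_dotProduct_sumElim]
    simp [hv]
  funext i
  have := congrFun h0 (Sum.inl i)
  rw [← Matrix.fromBlocks_toBlocks Q, Matrix.fromBlocks_mulVec] at this
  simpa using this

lemma range_block (hQ : Q.PosSemidef) (hB : IsMoorePenroseInv Q.toBlocks₂₂ B)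
    (x : Fin a → ℝ) :
    Q.toBlocks₂₂ *ᵥ (B *ᵥ (Q.toBlocks₂₁ *ᵥ x)) = Q.toBlocks₂₁ *ᵥ x := by
  set D := Q.toBlocks₂₂ with hD
  set v := Q.toBlocks₂₁ *ᵥ x with hv
  set s := v - (B * D) *ᵥ v with hs
  have hDs : D *ᵥ s = 0 := by
    simp only [hs, Matrix.mulVec_sub, Matrix.mulVec_mulVec, ← Matrix.mul_assoc, hB.1, sub_self]
  have h12 : Q.toBlocks₁₂ *ᵥ s = 0 := ker_block hQ hDs
  have hvs : v ⬝ᵥ s = 0 := by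
    rw [dotProduct_comm, hv, dot_trans, blocks21_eq hQ, Matrix.transpose_transpose,
      h12, zero_dotProduct]
  have hss : s ⬝ᵥ s = 0 := by
    have h2 : s ⬝ᵥ ((B * D) *ᵥ v) = 0 := by
      rw [dot_trans, hB.2.2.2, ← Matrix.mulVec_mulVec, hDs, Matrix.mulVec_zero,
        zero_dotProduct]
    calc s ⬝ᵥ s = s ⬝ᵥ v - s ⬝ᵥ ((B * D) *ᵥ v) := by
          rw [hs, dotProduct_sub]
      _ = 0 := by rw [h2, dotProduct_comm, hvs, sub_zero]
  have hs0 : s = 0 := by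
    have := dotProduct_self_eq_zero (v := s)
    exact this.mp hss
  have hBD : (B * D) *ᵥ v = v := by
    have h := hs0
    rw [hs, sub_eq_zero] at h
    exact h.symm
  have hsym : B * D = D * Bᵀ := by
    conv_lhs => rw [← hB.2.2.2]
    rw [Matrix.transpose_mul, blocks22_symm hQ]
  have hv' : (D * Bᵀ) *ᵥ v = v := by rw [← hsym]; exact hBD
  calc D *ᵥ (B *ᵥ v) = (D * B) *ᵥ ((D * Bᵀ) *ᵥ v) := by rw [hv', Matrix.mulVec_mulVec]
    _ = ((D * B * D) * Bᵀ) *ᵥ v := by rw [Matrix.mulVec_mulVec, Matrix.mul_assoc (D*B)]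
    _ = (D * Bᵀ) *ᵥ v := by rw [hB.1]
    _ = v := hv'

lemma block22_nonneg (hQ : Q.PosSemidef) (w : Fin b → ℝ) :
    0 ≤ w ⬝ᵥ Q.toBlocks₂₂ *ᵥ w := by
  have h := hQ.dotProduct_mulVec_nonneg (Sum.elim 0 w)
  simp only [star_trivial] at h
  calc (0:ℝ) ≤ Sum.elim 0 w ⬝ᵥ Q *ᵥ Sum.elim 0 w := h
    _ = w ⬝ᵥ Q.toBlocks₂₂ *ᵥ w := by
        conv_lhs => rw [← Matrix.fromBlocks_toBlocks Q]
        rw [Matrix.fromBlocks_mulVec, sumElim_dotProduct_sumElim]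
        simp

lemma quad_decomp (hQ : Q.PosSemidef) (hB : IsMoorePenroseInv Q.toBlocks₂₂ B)
    (x : Fin a → ℝ) (y : Fin b → ℝ) :
    Sum.elim x y ⬝ᵥ Q *ᵥ Sum.elim x y
      = x ⬝ᵥ genSchur Q B *ᵥ x
        + (y + B *ᵥ (Q.toBlocks₂₁ *ᵥ x)) ⬝ᵥ
            Q.toBlocks₂₂ *ᵥ (y + B *ᵥ (Q.toBlocks₂₁ *ᵥ x)) := by
  set A := Q.toBlocks₁₁
  set C := Q.toBlocks₁₂
  set D := Q.toBlocks₂₂ with hD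
  set v := Q.toBlocks₂₁ *ᵥ x with hv
  have hrange : D *ᵥ (B *ᵥ v) = v := range_block hQ hB x
  have h21 : Q.toBlocks₂₁ = Cᵀ := blocks21_eq hQ
  have hL : Sum.elim x y ⬝ᵥ Q *ᵥ Sum.elim x y
      = x ⬝ᵥ A *ᵥ x + x ⬝ᵥ C *ᵥ y + (y ⬝ᵥ v + y ⬝ᵥ D *ᵥ y) := by
    conv_lhs => rw [← Matrix.fromBlocks_toBlocks Q]
    rw [Matrix.fromBlocks_mulVec, sumElim_dotProduct_sumElim,
      dotProduct_add, dotProduct_add]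
    simp [Sum.elim_comp_inl, Sum.elim_comp_inr, hv]
    rfl
  have hS : x ⬝ᵥ genSchur Q B *ᵥ x = x ⬝ᵥ A *ᵥ x - v ⬝ᵥ (B *ᵥ v) := by
    rw [genSchur, Matrix.sub_mulVec, dotProduct_sub]
    congr 1
    rw [← Matrix.mulVec_mulVec, ← Matrix.mulVec_mulVec, dot_trans, ← blocks21_eq hQ]
  have e1 : x ⬝ᵥ C *ᵥ y = v ⬝ᵥ y := by
    rw [dot_trans, ← h21, hv]
  have e3 : (B *ᵥ v) ⬝ᵥ (D *ᵥ y) = v ⬝ᵥ y := by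
    rw [dot_trans, blocks22_symm hQ, hrange]
  have e4 : (B *ᵥ v) ⬝ᵥ (D *ᵥ (B *ᵥ v)) = v ⬝ᵥ (B *ᵥ v) := by
    rw [hrange, dotProduct_comm]
  have hW : (y + B *ᵥ v) ⬝ᵥ D *ᵥ (y + B *ᵥ v)
      = y ⬝ᵥ D *ᵥ y + y ⬝ᵥ v + (v ⬝ᵥ y + v ⬝ᵥ (B *ᵥ v)) := by
    rw [Matrix.mulVec_add, add_dotProduct, dotProduct_add, dotProduct_add,
      e3, e4]
    have : y ⬝ᵥ D *ᵥ (B *ᵥ v) = y ⬝ᵥ v := by rw [hrange]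
    rw [this]
  rw [hL, hS, hW, e1]
  have : y ⬝ᵥ v = v ⬝ᵥ y := dotProduct_comm _ _
  rw [this]; ring

theorem schur_cut_value_concave {a b : ℕ}
    (Q₁ Q₂ : Matrix (Fin a ⊕ Fin b) (Fin a ⊕ Fin b) ℝ)
    (hQ₁ : Q₁.PosSemidef) (hQ₂ : Q₂.PosSemidef)
    (l₁ l₂ : ℝ) (hl₁ : l₁ ∈ Set.Icc (0 : ℝ) 1) (hl₂ : l₂ = 1 - l₁)
    (Q : Matrix (Fin a ⊕ Fin b) (Fin a ⊕ Fin b) ℝ) (hQ : Q = l₁ • Q₁ + l₂ • Q₂)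
    (B₁ B₂ B : Matrix (Fin b) (Fin b) ℝ)
    (hB₁ : IsMoorePenroseInv Q₁.toBlocks₂₂ B₁)
    (hB₂ : IsMoorePenroseInv Q₂.toBlocks₂₂ B₂)
    (hB : IsMoorePenroseInv Q.toBlocks₂₂ B)
    (h : ℝ) (hh : 0 ≤ h) :
    l₁ * ((1 / 2) * Real.logb 2 (1 + h * ∑ i : Fin a, ∑ j : Fin a, genSchur Q₁ B₁ i j)) +
      l₂ * ((1 / 2) * Real.logb 2 (1 + h * ∑ i : Fin a, ∑ j : Fin a, genSchur Q₂ B₂ i j)) ≤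
    (1 / 2) * Real.logb 2 (1 + h * ∑ i : Fin a, ∑ j : Fin a, genSchur Q B i j) := by
  obtain ⟨hl₁0, hl₁1⟩ := hl₁
  have hl₂0 : 0 ≤ l₂ := by rw [hl₂]; linarith
  -- positive semidefiniteness of the combination
  have hsmul : ∀ (c : ℝ) (M : Matrix (Fin a ⊕ Fin b) (Fin a ⊕ Fin b) ℝ),
      0 ≤ c → M.PosSemidef → (c • M).PosSemidef := by
    intro c M hc hM
    refine Matrix.PosSemidef.of_dotProduct_mulVec_nonneg ?_ (fun z => ?_)
    · have := hM.1
      unfold Matrix.IsHermitian at this ⊢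
      rw [Matrix.conjTranspose_smul, this, star_trivial]
    · rw [Matrix.smul_mulVec, dotProduct_smul, smul_eq_mul]
      exact mul_nonneg hc (hM.dotProduct_mulVec_nonneg z)
  have hQpsd : Q.PosSemidef := by
    rw [hQ]; exact (hsmul l₁ Q₁ hl₁0 hQ₁).add (hsmul l₂ Q₂ hl₂0 hQ₂)
  -- the all-ones vector
  set x : Fin a → ℝ := fun _ => 1 with hx
  have hsum : ∀ S : Matrix (Fin a) (Fin a) ℝ,
      (∑ i, ∑ j, S i j) = x ⬝ᵥ S *ᵥ x := by
    intro S
    simp [hx, dotProduct, Matrix.mulVec]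
  set s₁ := x ⬝ᵥ genSchur Q₁ B₁ *ᵥ x with hs₁
  set s₂ := x ⬝ᵥ genSchur Q₂ B₂ *ᵥ x with hs₂
  set s := x ⬝ᵥ genSchur Q B *ᵥ x with hs
  -- nonnegativity of the Schur quadratic forms
  have hqnn : ∀ (M : Matrix (Fin a ⊕ Fin b) (Fin a ⊕ Fin b) ℝ)
      (C : Matrix (Fin b) (Fin b) ℝ), M.PosSemidef → IsMoorePenroseInv M.toBlocks₂₂ C →
      0 ≤ x ⬝ᵥ genSchur M C *ᵥ x := by
    intro M C hM hC
    have hd := quad_decomp hM hC x (-(C *ᵥ (M.toBlocks₂₁ *ᵥ x)))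
    rw [neg_add_cancel] at hd
    simp only [Matrix.mulVec_zero, dotProduct_zero, add_zero] at hd
    have := hM.dotProduct_mulVec_nonneg (Sum.elim x (-(C *ᵥ (M.toBlocks₂₁ *ᵥ x))))
    rw [star_trivial, hd] at this
    exact this
  have hs₁nn : 0 ≤ s₁ := hqnn Q₁ B₁ hQ₁ hB₁
  have hs₂nn : 0 ≤ s₂ := hqnn Q₂ B₂ hQ₂ hB₂
  -- the key concavity inequality: l₁ s₁ + l₂ s₂ ≤ s
  set y : Fin b → ℝ := -(B *ᵥ (Q.toBlocks₂₁ *ᵥ x)) with hy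
  set z := Sum.elim x y with hz
  have hseq : s = z ⬝ᵥ Q *ᵥ z := by
    have hd := quad_decomp hQpsd hB x y
    rw [hy, neg_add_cancel] at hd
    simp only [Matrix.mulVec_zero, dotProduct_zero, add_zero] at hd
    rw [hs, hz, hy, hd]
  have hsplit : z ⬝ᵥ Q *ᵥ z = l₁ * (z ⬝ᵥ Q₁ *ᵥ z) + l₂ * (z ⬝ᵥ Q₂ *ᵥ z) := by
    rw [hQ, Matrix.add_mulVec, dotProduct_add, Matrix.smul_mulVec,
      Matrix.smul_mulVec, dotProduct_smul, dotProduct_smul,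
      smul_eq_mul, smul_eq_mul]
  have hge : ∀ (M : Matrix (Fin a ⊕ Fin b) (Fin a ⊕ Fin b) ℝ)
      (C : Matrix (Fin b) (Fin b) ℝ) (hM : M.PosSemidef)
      (hC : IsMoorePenroseInv M.toBlocks₂₂ C),
      x ⬝ᵥ genSchur M C *ᵥ x ≤ z ⬝ᵥ M *ᵥ z := by
    intro M C hM hC
    rw [hz, quad_decomp hM hC x y]
    have := block22_nonneg hM (y + C *ᵥ (M.toBlocks₂₁ *ᵥ x))
    linarith
  have hkey : l₁ * s₁ + l₂ * s₂ ≤ s := by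
    rw [hseq, hsplit]
    have h1 := hge Q₁ B₁ hQ₁ hB₁
    have h2 := hge Q₂ B₂ hQ₂ hB₂
    rw [← hs₁] at h1
    rw [← hs₂] at h2
    nlinarith [mul_le_mul_of_nonneg_left h1 hl₁0, mul_le_mul_of_nonneg_left h2 hl₂0]
  -- logarithm part
  rw [hsum (genSchur Q₁ B₁), hsum (genSchur Q₂ B₂), hsum (genSchur Q B), ← hs₁, ← hs₂, ← hs]
  set u₁ := 1 + h * s₁ with hu₁
  set u₂ := 1 + h * s₂ with hu₂
  set u := 1 + h * s with hu
  have hu₁1 : (1:ℝ) ≤ u₁ := by nlinarith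
  have hu₂1 : (1:ℝ) ≤ u₂ := by nlinarith
  have hcomb : l₁ * u₁ + l₂ * u₂ ≤ u := by
    rw [hu₁, hu₂, hu, hl₂]
    nlinarith
  have hcombpos : (0:ℝ) < l₁ * u₁ + l₂ * u₂ := by nlinarith
  have hconc : l₁ * Real.log u₁ + l₂ * Real.log u₂ ≤ Real.log (l₁ * u₁ + l₂ * u₂) := by
    have := (strictConcaveOn_log_Ioi.concaveOn).2 (Set.mem_Ioi.mpr (by linarith : (0:ℝ) < u₁))
      (Set.mem_Ioi.mpr (by linarith : (0:ℝ) < u₂)) hl₁0 hl₂0 (by rw [hl₂]; ring)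
    simpa [smul_eq_mul] using this
  have hmono : Real.log (l₁ * u₁ + l₂ * u₂) ≤ Real.log u :=
    Real.log_le_log hcombpos hcomb
  have hmain : l₁ * Real.log u₁ + l₂ * Real.log u₂ ≤ Real.log u := le_trans hconc hmono
  have h2pos : (0:ℝ) < Real.log 2 := Real.log_pos (by norm_num)
  simp only [Real.logb]
  have hdiv : (l₁ * Real.log u₁ + l₂ * Real.log u₂) / Real.log 2 ≤ Real.log u / Real.log 2 :=
    (div_le_div_iff_of_pos_right h2pos).mpr hmain
  have hexp : l₁ * (1 / 2 * (Real.log u₁ / Real.log 2)) + l₂ * (1 / 2 * (Real.log u₂ / Real.log 2))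
      = 1 / 2 * ((l₁ * Real.log u₁ + l₂ * Real.log u₂) / Real.log 2) := by ring
  rw [hexp]
  linarith
end

section
/- For every integer N ≥ 2 and reals g, h > 0 with h < g < N²·h and N·√(gh) ≥ 1 and N·h ≤ 1, setting n = N − ⌈N²h⌉ one has 0 ≤ n ≤ N−1 and (1/2)·log(1 + ⌈N²h⌉·g) + (1/2)·log(1 + N²h/⌈N²h⌉) ≤ (1/2)·log(1 + 2N²gh) + 1/2. -/
theorem cutset_instantiation_coherent (N : ℕ) (hN : 2 ≤ N) (g h : ℝ)
    (hg : 0 < g) (hh : 0 < h) (h1 : h < g) (h2 : g < (N : ℝ) ^ 2 * h)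
    (h3 : 1 ≤ (N : ℝ) * Real.sqrt (g * h)) (h4 : (N : ℝ) * h ≤ 1) :
    0 ≤ (N : ℤ) - ⌈(N : ℝ) ^ 2 * h⌉ ∧
    (N : ℤ) - ⌈(N : ℝ) ^ 2 * h⌉ ≤ (N : ℤ) - 1 ∧
    (1 / 2) * Real.logb 2 (1 + (⌈(N : ℝ) ^ 2 * h⌉ : ℝ) * g) +
        (1 / 2) * Real.logb 2 (1 + (N : ℝ) ^ 2 * h / (⌈(N : ℝ) ^ 2 * h⌉ : ℝ)) ≤
      (1 / 2) * Real.logb 2 (1 + 2 * (N : ℝ) ^ 2 * g * h) + 1 / 2 := by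
  have hNpos : (0:ℝ) < N := by positivity
  have hN2h_pos : (0:ℝ) < (N:ℝ)^2 * h := by positivity
  -- N² g h ≥ 1
  have hgh : (1:ℝ) ≤ (N:ℝ)^2 * (g*h) := by
    have h3' : (1:ℝ) ≤ ((N:ℝ) * Real.sqrt (g*h))^2 := by nlinarith
    have hs : Real.sqrt (g*h) ^ 2 = g*h := Real.sq_sqrt (by positivity)
    nlinarith
  -- N² h > 1
  have hN2h1 : (1:ℝ) < (N:ℝ)^2 * h := by nlinarith
  -- g ≤ N² g h
  have hgle : g ≤ (N:ℝ)^2 * g * h := by nlinarith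
  -- ceiling facts
  set c : ℤ := ⌈(N : ℝ) ^ 2 * h⌉ with hc
  have hc_pos : 0 < c := Int.ceil_pos.mpr hN2h_pos
  have hc_geR : (N:ℝ)^2 * h ≤ (c:ℝ) := Int.le_ceil _
  have hc_leR : (c:ℝ) ≤ 1 + (N:ℝ)^2 * h := by
    have := Int.ceil_lt_add_one ((N:ℝ)^2 * h)
    linarith
  have hcR_pos : (0:ℝ) < (c:ℝ) := by exact_mod_cast hc_pos
  -- N²h ≤ N so c ≤ N
  have hNle : (N:ℝ)^2 * h ≤ (N:ℝ) := by nlinarith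
  have hcN : c ≤ (N:ℤ) := by
    rw [hc, Int.ceil_le]; exact_mod_cast hNle
  refine ⟨by omega, by omega, ?_⟩
  have t1 : Real.logb 2 (1 + (c:ℝ) * g) ≤ Real.logb 2 (1 + 2 * (N:ℝ)^2 * g * h) := by
    have : 1 + (c:ℝ)*g ≤ 1 + 2*(N:ℝ)^2*g*h := by nlinarith
    gcongr <;> first | linarith | positivity
  have t2 : Real.logb 2 (1 + (N:ℝ)^2 * h / (c:ℝ)) ≤ 1 := by
    have hle : (N:ℝ)^2 * h / (c:ℝ) ≤ 1 := by
      rw [div_le_one hcR_pos]; exact hc_geR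
    calc Real.logb 2 (1 + (N:ℝ)^2 * h / (c:ℝ)) ≤ Real.logb 2 2 := by
          gcongr <;> first | linarith | positivity
      _ = 1 := by simp
  have hpos1 : (0:ℝ) < 1 + (c:ℝ) * g := by positivity
  linarith
end

section
/- For every integer N ≥ 2 and reals g, h > 0 with h ≤ g ≤ N²·h and N·√(gh) < 1, setting m = ⌈N·√(h/g)⌉ one has 1 ≤ m ≤ N and (1/2)·log(1 + m·g) + (1/2)·log(1 + N²h/m) ≤ log(1 + 2N·√(gh)). -/
theorem cutset_instantiation_noncoherent (N : ℕ) (hN : 2 ≤ N) (g h : ℝ)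
    (hg : 0 < g) (hh : 0 < h) (h1 : h ≤ g) (h2 : g ≤ (N : ℝ) ^ 2 * h)
    (h3 : (N : ℝ) * Real.sqrt (g * h) < 1) :
    1 ≤ ⌈(N : ℝ) * Real.sqrt (h / g)⌉ ∧
    ⌈(N : ℝ) * Real.sqrt (h / g)⌉ ≤ (N : ℤ) ∧
    (1 / 2) * Real.logb 2 (1 + (⌈(N : ℝ) * Real.sqrt (h / g)⌉ : ℝ) * g) +
        (1 / 2) * Real.logb 2 (1 + (N : ℝ) ^ 2 * h / (⌈(N : ℝ) * Real.sqrt (h / g)⌉ : ℝ)) ≤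
      Real.logb 2 (1 + 2 * (N : ℝ) * Real.sqrt (g * h)) := by
  have hNpos : (0:ℝ) < N := by positivity
  set x : ℝ := (N : ℝ) * Real.sqrt (h / g) with hxdef
  have hxpos : 0 < x := by positivity
  have hm1 : 1 ≤ ⌈x⌉ := Int.one_le_ceil_iff.mpr hxpos
  have hsq1 : Real.sqrt (h / g) ≤ 1 := by
    rw [show (1:ℝ) = Real.sqrt 1 by simp]
    exact Real.sqrt_le_sqrt (by rw [div_le_one hg]; exact h1)
  have hxN : x ≤ N := by
    calc x ≤ (N:ℝ) * 1 := by apply mul_le_mul_of_nonneg_left hsq1 hNpos.le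
    _ = N := by ring
  have hmN : ⌈x⌉ ≤ (N : ℤ) := by
    exact_mod_cast Int.ceil_le.mpr (by exact_mod_cast hxN)
  refine ⟨hm1, hmN, ?_⟩
  set c : ℝ := (N : ℝ) * Real.sqrt (g * h) with hcdef
  have hcpos : 0 < c := by positivity
  have hmr : (1:ℝ) ≤ (⌈x⌉ : ℝ) := by exact_mod_cast hm1
  have hmpos : (0:ℝ) < (⌈x⌉ : ℝ) := by linarith
  -- √(h/g) * g = √(g*h)
  have key : Real.sqrt (h / g) * g = Real.sqrt (g * h) := by
    rw [show g = Real.sqrt (g ^ 2) by rw [Real.sqrt_sq hg.le], ← Real.sqrt_mul (by positivity)]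
    congr 1
    field_simp
    nlinarith [Real.sq_sqrt (sq_nonneg g)]
  -- g ≤ c
  have hgc : g ≤ c := by
    have : g = Real.sqrt (g ^ 2) := (Real.sqrt_sq hg.le).symm
    rw [this, hcdef, show (N:ℝ) * Real.sqrt (g*h) = Real.sqrt ((N:ℝ)^2 * (g*h)) by
      rw [Real.sqrt_mul (by positivity : (0:ℝ) ≤ (N:ℝ)^2), Real.sqrt_sq hNpos.le]]
    apply Real.sqrt_le_sqrt
    calc g ^ 2 = g * g := sq g
    _ ≤ ((N:ℝ)^2 * h) * g := by nlinarith
    _ = (N:ℝ)^2 * (g*h) := by ring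
  -- m*g ≤ 2c
  have hmg : (⌈x⌉ : ℝ) * g ≤ 2 * c := by
    have hceil : (⌈x⌉ : ℝ) ≤ x + 1 := le_of_lt (Int.ceil_lt_add_one x)
    have : (⌈x⌉ : ℝ) * g ≤ (x + 1) * g := mul_le_mul_of_nonneg_right hceil hg.le
    have hxg : x * g = c := by rw [hxdef, hcdef, mul_assoc, key]
    nlinarith
  -- N²h/m ≤ c
  have hdiv : (N:ℝ)^2 * h / (⌈x⌉ : ℝ) ≤ c := by
    rw [div_le_iff₀ hmpos]
    have hxle : x ≤ (⌈x⌉ : ℝ) := Int.le_ceil x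
    have hcx : c * x = (N:ℝ)^2 * h := by
      rw [hcdef, hxdef]
      have : Real.sqrt (g * h) * Real.sqrt (h / g) = h := by
        rw [← Real.sqrt_mul (by positivity)]
        rw [show g * h * (h / g) = h ^ 2 by field_simp, Real.sqrt_sq hh.le]
      nlinarith [this]
    nlinarith
  have hb : (1:ℝ) < 2 := one_lt_two
  have p1 : (0:ℝ) < (⌈x⌉ : ℝ) * g := mul_pos hmpos hg
  have p2 : (0:ℝ) < (N:ℝ)^2 * h / (⌈x⌉ : ℝ) := div_pos (by positivity) hmpos
  have hA : Real.logb 2 (1 + (⌈x⌉ : ℝ) * g) ≤ Real.logb 2 (1 + 2 * c) :=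
    Real.logb_le_logb_of_le one_lt_two (by linarith) (by linarith)
  have hB : Real.logb 2 (1 + (N:ℝ)^2 * h / (⌈x⌉ : ℝ)) ≤ Real.logb 2 (1 + 2 * c) :=
    Real.logb_le_logb_of_le one_lt_two (by linarith) (by linarith)
  have : 1 + 2 * (N:ℝ) * Real.sqrt (g * h) = 1 + 2 * c := by rw [hcdef]; ring
  rw [this]
  linarith
end

section
/- For every integer N ≥ 2 and reals g, h > 0, the capacity upper bound and lower bound of the symmetric diamond network satisfy: in each of the five regimes of Theorems 1 and 2 (cases indexed by the conditions max{g,Nh} ≥ 1; max{g,Nh} < 1 with g ≤ h; with g ∈ (h,N²h) and N√(gh) ≥ 1; with g ∈ (h,N²h) and N√(gh) < 1; with g ≥ N²h), the difference (upper bound) − (lower bound) is at most 1 + (1/2)·log 3 ≤ 1.8, and the ratio (upper bound)/(lower bound) is at most 4/ln(4/3) ≤ 14. -/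
private lemma logb23_le : Real.logb 2 3 ≤ 8/5 := by
  rw [Real.logb, div_le_iff₀ (Real.log_pos one_lt_two)]
  have h : Real.log (3^5) ≤ Real.log (2^8) := Real.log_le_log (by norm_num) (by norm_num)
  rw [Real.log_pow, Real.log_pow] at h
  push_cast at h; linarith

private lemma logb23_nonneg : 0 ≤ Real.logb 2 3 := Real.logb_nonneg one_lt_two (by norm_num)

private lemma log43_ge : (2/7:ℝ) ≤ Real.log (4/3) := by
  rw [Real.le_log_iff_exp_le (by norm_num)]
  have h7 : Real.exp (2/7) ^ (7:ℕ) = Real.exp 2 := by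
    rw [← Real.exp_nat_mul]; norm_num
  have h2 : Real.exp 2 = Real.exp 1 ^ (2:ℕ) := by rw [← Real.exp_nat_mul]; norm_num
  have he := Real.exp_one_lt_d9
  have : Real.exp (2/7) ^ (7:ℕ) ≤ (4/3:ℝ)^(7:ℕ) := by
    rw [h7, h2]; nlinarith [Real.exp_pos 1]
  exact le_of_pow_le_pow_left₀ (by norm_num) (by norm_num) this

private lemma log43_pos : (0:ℝ) < Real.log (4/3) := Real.log_pos (by norm_num)

private lemma log43_le : Real.log (4/3) ≤ 1/3 := by
  have := Real.log_le_sub_one_of_pos (x := 4/3) (by norm_num)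
  linarith

/-- `log(1+3y) ≤ 3 log(1+y)` -/
private lemma logb_three_mul (y : ℝ) (hy : 0 ≤ y) :
    Real.logb 2 (1 + 3*y) ≤ 3 * Real.logb 2 (1 + y) := by
  have h1 : (1:ℝ) + 3*y ≤ (1+y)^(3:ℕ) := by nlinarith [sq_nonneg y, mul_nonneg (mul_nonneg hy hy) hy]
  calc Real.logb 2 (1 + 3*y) ≤ Real.logb 2 ((1+y)^(3:ℕ)) :=
        Real.logb_le_logb_of_le one_lt_two (by linarith) h1
    _ = 3 * Real.logb 2 (1+y) := by rw [Real.logb_pow]; norm_num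

/-- `log(1+2y) ≤ 2 log(1+y)` -/
private lemma logb_two_mul (y : ℝ) (hy : 0 ≤ y) :
    Real.logb 2 (1 + 2*y) ≤ 2 * Real.logb 2 (1 + y) := by
  have h1 : (1:ℝ) + 2*y ≤ (1+y)^(2:ℕ) := by nlinarith
  calc Real.logb 2 (1 + 2*y) ≤ Real.logb 2 ((1+y)^(2:ℕ)) :=
        Real.logb_le_logb_of_le one_lt_two (by linarith) h1
    _ = 2 * Real.logb 2 (1+y) := by rw [Real.logb_pow]; norm_num

/-- `log(1+3y) ≤ log 3 + log(1+y)` -/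
private lemma logb_three_add (y : ℝ) (hy : 0 ≤ y) :
    Real.logb 2 (1 + 3*y) ≤ Real.logb 2 3 + Real.logb 2 (1 + y) := by
  have h1 : (1:ℝ) + 3*y ≤ 3*(1+y) := by nlinarith
  calc Real.logb 2 (1 + 3*y) ≤ Real.logb 2 (3*(1+y)) :=
        Real.logb_le_logb_of_le one_lt_two (by linarith) h1
    _ = Real.logb 2 3 + Real.logb 2 (1+y) :=
        Real.logb_mul (by norm_num) (by linarith)

/-- `log(1+2t) ≤ 1 + log 3 + log(1+t/3)` -/
private lemma logb_six_add (t : ℝ) (ht : 0 ≤ t) :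
    Real.logb 2 (1 + 2*t) ≤ 1 + Real.logb 2 3 + Real.logb 2 (1 + t/3) := by
  have h1 : (1:ℝ) + 2*t ≤ 6*(1 + t/3) := by nlinarith
  have h3 : (0:ℝ) < 1 + t/3 := by linarith
  calc Real.logb 2 (1 + 2*t) ≤ Real.logb 2 (6*(1 + t/3)) :=
        Real.logb_le_logb_of_le one_lt_two (by linarith) h1
    _ = Real.logb 2 6 + Real.logb 2 (1 + t/3) := Real.logb_mul (by norm_num) (by linarith)
    _ = 1 + Real.logb 2 3 + Real.logb 2 (1 + t/3) := by
        have : (6:ℝ) = 2*3 := by norm_num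
        rw [this, Real.logb_mul (by norm_num) (by norm_num), Real.logb_self_eq_one one_lt_two]

set_option maxHeartbeats 1000000 in
theorem capacity_approximation_symmetric (N : ℕ) (hN : 2 ≤ N) (g h : ℝ)
    (hg : 0 < g) (hh : 0 < h) :
    (1 + (1 / 2) * Real.logb 2 3 ≤ 1.8) ∧
    (4 / Real.log (4 / 3) ≤ 14) ∧
    -- Regime 1: max{g, Nh} ≥ 1
    (1 ≤ max g ((N : ℝ) * h) →
      (1 / 2) * Real.logb 2 (1 + (N : ℝ) * min g ((N : ℝ) * h)) -
          (1 / 2) * Real.logb 2 (1 + (1 / 3) * (N : ℝ) * min g ((N : ℝ) * h)) ≤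
        1 + (1 / 2) * Real.logb 2 3 ∧
      ((1 / 2) * Real.logb 2 (1 + (N : ℝ) * min g ((N : ℝ) * h))) /
          ((1 / 2) * Real.logb 2 (1 + (1 / 3) * (N : ℝ) * min g ((N : ℝ) * h))) ≤
        4 / Real.log (4 / 3)) ∧
    -- Regime 2: max{g, Nh} < 1 and g ≤ h
    (max g ((N : ℝ) * h) < 1 → g ≤ h →
      (1 / 2) * Real.logb 2 (1 + (N : ℝ) * g) -
          (1 / 2) * Real.log (4 / 3) * Real.logb 2 (1 + (N : ℝ) * g) ≤
        1 + (1 / 2) * Real.logb 2 3 ∧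
      ((1 / 2) * Real.logb 2 (1 + (N : ℝ) * g)) /
          ((1 / 2) * Real.log (4 / 3) * Real.logb 2 (1 + (N : ℝ) * g)) ≤
        4 / Real.log (4 / 3)) ∧
    -- Regime 3: max{g, Nh} < 1, h < g < N²h, N√(gh) ≥ 1
    (max g ((N : ℝ) * h) < 1 → h < g → g < (N : ℝ) ^ 2 * h →
        1 ≤ (N : ℝ) * Real.sqrt (g * h) →
      ((1 / 2) * Real.logb 2 (1 + 2 * (N : ℝ) ^ 2 * g * h) + 1 / 2) -
          (1 / 2) * Real.logb 2 (1 + (1 / 3) * (N : ℝ) ^ 2 * g * h) ≤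
        1 + (1 / 2) * Real.logb 2 3 ∧
      ((1 / 2) * Real.logb 2 (1 + 2 * (N : ℝ) ^ 2 * g * h) + 1 / 2) /
          ((1 / 2) * Real.logb 2 (1 + (1 / 3) * (N : ℝ) ^ 2 * g * h)) ≤
        4 / Real.log (4 / 3)) ∧
    -- Regime 4: max{g, Nh} < 1, h < g < N²h, N√(gh) < 1
    (max g ((N : ℝ) * h) < 1 → h < g → g < (N : ℝ) ^ 2 * h →
        (N : ℝ) * Real.sqrt (g * h) < 1 →
      Real.logb 2 (1 + 2 * (N : ℝ) * Real.sqrt (g * h)) -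
          (1 / 2) * Real.log (4 / 3) * Real.logb 2 (1 + (N : ℝ) * Real.sqrt (g * h)) ≤
        1 + (1 / 2) * Real.logb 2 3 ∧
      (Real.logb 2 (1 + 2 * (N : ℝ) * Real.sqrt (g * h))) /
          ((1 / 2) * Real.log (4 / 3) * Real.logb 2 (1 + (N : ℝ) * Real.sqrt (g * h))) ≤
        4 / Real.log (4 / 3)) ∧
    -- Regime 5: max{g, Nh} < 1 and g ≥ N²h
    (max g ((N : ℝ) * h) < 1 → (N : ℝ) ^ 2 * h ≤ g →
      (1 / 2) * Real.logb 2 (1 + (N : ℝ) ^ 2 * h) -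
          (1 / 2) * Real.log (4 / 3) * Real.logb 2 (1 + (N : ℝ) ^ 2 * h) ≤
        1 + (1 / 2) * Real.logb 2 3 ∧
      ((1 / 2) * Real.logb 2 (1 + (N : ℝ) ^ 2 * h)) /
          ((1 / 2) * Real.log (4 / 3) * Real.logb 2 (1 + (N : ℝ) ^ 2 * h)) ≤
        4 / Real.log (4 / 3)) := by
  have hNR : (2:ℝ) ≤ (N:ℝ) := by exact_mod_cast hN
  have hNpos : (0:ℝ) < (N:ℝ) := by linarith
  have l43 := log43_ge
  have l43p := log43_pos
  have l43u := log43_le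
  have lb3u := logb23_le
  have lb3n := logb23_nonneg
  have L2u := Real.log_two_lt_d9
  have L2l := Real.log_two_gt_d9
  refine ⟨by norm_num; linarith, ?_, ?_, ?_, ?_, ?_, ?_⟩
  · rw [div_le_iff₀ l43p]; linarith
  · -- Regime 1
    intro _
    set m : ℝ := (N:ℝ) * min g ((N:ℝ) * h) with hm
    have hmpos : 0 < m := mul_pos hNpos (lt_min hg (mul_pos hNpos hh))
    have e1 : (1:ℝ) + 1/3 * (N:ℝ) * min g ((N:ℝ)*h) = 1 + m/3 := by rw [hm]; ring
    have e2 : (1:ℝ) + (N:ℝ) * min g ((N:ℝ)*h) = 1 + 3*(m/3) := by rw [hm]; ring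
    rw [e1, e2]
    have hy : (0:ℝ) ≤ m/3 := by linarith
    have h3 := logb_three_mul (m/3) hy
    have hadd := logb_three_add (m/3) hy
    have hApos : 0 < Real.logb 2 (1 + m/3) := Real.logb_pos one_lt_two (by linarith)
    constructor
    · linarith
    · rw [div_le_div_iff₀ (by linarith) l43p]
      nlinarith [hApos, mul_pos hApos l43p]
  · -- Regime 2
    intro hmax hgh
    have hNh : (N:ℝ) * h < 1 := lt_of_le_of_lt (le_max_right _ _) hmax
    have hNg : (N:ℝ) * g < 1 := lt_of_le_of_lt (by nlinarith) hNh
    have hNgpos : 0 < (N:ℝ) * g := mul_pos hNpos hg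
    have hL : Real.logb 2 (1 + (N:ℝ)*g) ≤ 1 := by
      calc Real.logb 2 (1 + (N:ℝ)*g) ≤ Real.logb 2 2 :=
            Real.logb_le_logb_of_le one_lt_two (by linarith) (by linarith)
        _ = 1 := Real.logb_self_eq_one one_lt_two
    have hLpos : 0 < Real.logb 2 (1 + (N:ℝ)*g) := Real.logb_pos one_lt_two (by linarith)
    constructor
    · nlinarith [mul_pos l43p hLpos]
    · rw [div_le_div_iff₀ (mul_pos (mul_pos (by norm_num : (0:ℝ) < 1/2) l43p) hLpos) l43p]
      nlinarith [mul_pos hLpos l43p]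
  · -- Regime 3
    intro _ _ _ hs
    set t : ℝ := (N:ℝ)^2 * g * h with ht
    have htpos : 0 < t := by positivity
    have ht1 : 1 ≤ t := by
      have hsq : (N:ℝ)^2 * (g*h) = ((N:ℝ) * Real.sqrt (g*h))^2 := by
        rw [mul_pow, Real.sq_sqrt (by positivity)]
      nlinarith [hs]
    have e1 : (1:ℝ) + 2 * (N:ℝ)^2 * g * h = 1 + 2*t := by rw [ht]; ring
    have e2 : (1:ℝ) + 1/3 * (N:ℝ)^2 * g * h = 1 + t/3 := by rw [ht]; ring
    rw [e1, e2]
    have h6 := logb_six_add t (by linarith)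
    have hA43 : Real.log (4/3) / Real.log 2 ≤ Real.logb 2 (1 + t/3) := by
      have : Real.logb 2 (4/3) ≤ Real.logb 2 (1 + t/3) :=
        Real.logb_le_logb_of_le one_lt_two (by norm_num) (by linarith)
      rwa [Real.logb] at this
    have hApos : 0 < Real.logb 2 (1 + t/3) := Real.logb_pos one_lt_two (by linarith)
    have hl2 : (0:ℝ) < Real.log 2 := Real.log_pos one_lt_two
    have hA' : Real.log (4/3) ≤ Real.logb 2 (1 + t/3) * Real.log 2 := by
      rw [div_le_iff₀ hl2] at hA43; linarith
    constructor
    · linarith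
    · rw [div_le_div_iff₀ (by linarith) l43p]
      set A := Real.logb 2 (1 + t/3) with hA
      set B := Real.logb 2 (1 + 2*t) with hB
      have hBA : B ≤ 1 + Real.logb 2 3 + A := h6
      have hBl : B * Real.log (4/3) ≤ (1 + Real.logb 2 3 + A) * Real.log (4/3) :=
        mul_le_mul_of_nonneg_right hBA l43p.le
      have hAl : A * Real.log (4/3) ≤ A * (1/3) :=
        mul_le_mul_of_nonneg_left l43u hApos.le
      have hcl : Real.logb 2 3 * Real.log (4/3) ≤ 8/15 := by nlinarith
      have hAL2 : A * Real.log 2 ≤ A * 0.6931471808 :=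
        mul_le_mul_of_nonneg_left L2u.le hApos.le
      have hAlow : (2/7 : ℝ) ≤ A * 0.6931471808 := by nlinarith
      nlinarith [hBl, hAl, hcl, hAlow]
  · -- Regime 4
    intro _ _ _ hs1
    set s : ℝ := (N:ℝ) * Real.sqrt (g*h) with hsdef
    have hspos : 0 < s := mul_pos hNpos (Real.sqrt_pos.mpr (by positivity))
    have hApos : 0 < Real.logb 2 (1 + s) := Real.logb_pos one_lt_two (by linarith)
    have h2 := logb_two_mul s (le_of_lt hspos)
    have hB3 : Real.logb 2 (1 + 2*s) ≤ Real.logb 2 3 :=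
      Real.logb_le_logb_of_le one_lt_two (by linarith) (by linarith)
    have e : (1:ℝ) + 2 * (N:ℝ) * Real.sqrt (g*h) = 1 + 2*s := by rw [hsdef]; ring
    rw [e]
    constructor
    · nlinarith [mul_pos l43p hApos]
    · rw [div_le_div_iff₀ (mul_pos (mul_pos (by norm_num : (0:ℝ) < 1/2) l43p) hApos) l43p]
      nlinarith [mul_le_mul_of_nonneg_right h2 l43p.le]
  · -- Regime 5
    intro hmax hge
    have hglt : g < 1 := lt_of_le_of_lt (le_max_left _ _) hmax
    have hx : (N:ℝ)^2 * h < 1 := lt_of_le_of_lt hge hglt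
    have hxpos : 0 < (N:ℝ)^2 * h := by positivity
    have hL : Real.logb 2 (1 + (N:ℝ)^2*h) ≤ 1 := by
      calc Real.logb 2 (1 + (N:ℝ)^2*h) ≤ Real.logb 2 2 :=
            Real.logb_le_logb_of_le one_lt_two (by linarith) (by linarith)
        _ = 1 := Real.logb_self_eq_one one_lt_two
    have hLpos : 0 < Real.logb 2 (1 + (N:ℝ)^2*h) := Real.logb_pos one_lt_two (by linarith)
    constructor
    · nlinarith [mul_pos l43p hLpos]
    · rw [div_le_div_iff₀ (mul_pos (mul_pos (by norm_num : (0:ℝ) < 1/2) l43p) hLpos) l43p]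
      nlinarith [mul_pos hLpos l43p]
end
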